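/- The closed unit ball of the Banach space ℓ1 of absolutely summable real sequences, endowed with the subspace topology inherited from the weak topology of ℓ1, is not an Ascoli space. -/

import Mathlib

open Topology

/-- A topological space `Y` is *Ascoli* if for every compact subset `K` of `C(Y, ℝ)`
(endowed with the compact-open topology), the evaluation map `(y, f) ↦ f y` is jointly
continuous on `Y × K`. -/
def IsAscoli (Y : Type*) [TopologicalSpace Y] : Prop :=
  ∀ K : Set C(Y, ℝ), IsCompact K →
    Continuous fun p : Y × K => (p.2 : C(Y, ℝ)) p.1

/-- The Banach space `ℓ¹` of absolutely summable real sequences. -/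
abbrev ell1 : Type := lp (fun _ : ℕ => ℝ) 1

/-- The closed unit ball of `ℓ¹`, viewed as a subset of `ℓ¹` equipped with its weak
topology. -/
def ell1WeakBall : Set (WeakSpace ℝ ell1) :=
  {x | ‖(toWeakSpace ℝ ell1).symm x‖ ≤ 1}

namespace Aux11
open Filter
noncomputable section

abbrev W1 : Type := WeakSpace ℝ ell1

def sy (x : W1) : ell1 := (toWeakSpace ℝ ell1).symm x

lemma summable_abs (x : ell1) : Summable fun i => |x i| := by
  have h := lp.memℓp x
  rw [memℓp_gen_iff (by simp [ENNReal.toReal_one] : (0:ℝ) < (1 : ENNReal).toReal)] at h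
  simpa [ENNReal.toReal_one] using h

lemma norm_eq (x : ell1) : ‖x‖ = ∑' i, |x i| := by
  rw [lp.norm_eq_tsum_rpow (by simp [ENNReal.toReal_one] : (0:ℝ) < (1 : ENNReal).toReal)]
  simp [ENNReal.toReal_one, Real.rpow_one]

def coordCLM (n : ℕ) : ell1 →L[ℝ] ℝ :=
  LinearMap.mkContinuous
    { toFun := fun x => x n
      map_add' := fun x y => by simp [lp.coeFn_add]
      map_smul' := fun c x => by simp [lp.coeFn_smul] }
    1 (fun x => by rw [one_mul]; exact lp.norm_apply_le_norm one_ne_zero x n)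

@[simp] lemma coordCLM_apply (n : ℕ) (x : ell1) : coordCLM n x = x n := rfl

lemma contW (f : ell1 →L[ℝ] ℝ) : Continuous fun x : W1 => f (sy x) :=
  WeakBilin.eval_continuous ((topDualPairing ℝ ell1).flip) f

section dual
variable {g : ℕ → ℝ}

lemma summable_mul (hg : ∀ i, |g i| ≤ 1) (x : ell1) : Summable fun i => g i * x i := by
  refine Summable.of_norm (Summable.of_nonneg_of_le (fun i => norm_nonneg _)
    (fun i => ?_) (summable_abs x))
  rw [Real.norm_eq_abs, abs_mul]
  exact mul_le_of_le_one_left (abs_nonneg _) (hg i)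

def dualCLM (g : ℕ → ℝ) (hg : ∀ i, |g i| ≤ 1) : ell1 →L[ℝ] ℝ :=
  LinearMap.mkContinuous
    { toFun := fun x => ∑' i, g i * x i
      map_add' := fun x y => by
        have h : (fun i => g i * (x + y) i) = fun i => g i * x i + g i * y i := by
          funext i; rw [lp.coeFn_add]; simp [mul_add]
        show ∑' i, g i * (x + y) i = _
        rw [h, Summable.tsum_add (summable_mul hg x) (summable_mul hg y)]
      map_smul' := fun c x => by
        have h : (fun i => g i * (c • x) i) = fun i => c * (g i * x i) := by
          funext i; rw [lp.coeFn_smul]; simp; ring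
        show ∑' i, g i * (c • x) i = _
        rw [h, (summable_mul hg x).tsum_mul_left c]; rfl }
    1 (fun x => by
      rw [norm_eq, one_mul]
      refine le_trans (norm_tsum_le_tsum_norm ((summable_mul hg x).abs.congr
        (fun i => (Real.norm_eq_abs _).symm))) ?_
      refine Summable.tsum_le_tsum (fun i => ?_) ((summable_mul hg x).abs.congr
        (fun i => (Real.norm_eq_abs _).symm)) (summable_abs x)
      rw [Real.norm_eq_abs, abs_mul]
      exact mul_le_of_le_one_left (abs_nonneg _) (hg i))

lemma dualCLM_apply (g : ℕ → ℝ) (hg : ∀ i, |g i| ≤ 1) (x : ell1) :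
    dualCLM g hg x = ∑' i, g i * x i := rfl

end dual

/-- tail of the absolute values -/
def tailAbs (x : ell1) (M : ℕ) : ℝ :=
  ∑' i, Set.indicator {i : ℕ | M ≤ i} (fun j => |x j|) i

lemma summable_indicator (x : ell1) (s : Set ℕ) :
    Summable (s.indicator fun j => |x j|) :=
  (summable_abs x).indicator s

lemma tailAbs_eq (x : ell1) (M : ℕ) :
    tailAbs x M = (∑' i, |x i|) - ∑ i ∈ Finset.range M, |x i| := by
  have h := summable_abs x
  have h2 := Summable.sum_add_tsum_compl (s := Finset.range M) h
  have hset : ((↑(Finset.range M) : Set ℕ)ᶜ : Set ℕ) = {i : ℕ | M ≤ i} := by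
    ext i; simp [Nat.not_lt]
  have h3 := tsum_subtype (f := fun j : ℕ => |x j|) ((↑(Finset.range M) : Set ℕ)ᶜ)
  rw [hset] at h3
  rw [tailAbs, ← h3]
  rw [hset] at h2
  linarith

lemma tailAbs_tendsto (x : ell1) : Tendsto (tailAbs x) atTop (𝓝 0) := by
  have h : (tailAbs x) = fun M => (∑' i, |x i|) - ∑ i ∈ Finset.range M, |x i| := by
    funext M; exact tailAbs_eq x M
  rw [h]
  have h2 := (summable_abs x).hasSum.tendsto_sum_nat
  have := (tendsto_const_nhds (x := ∑' i, |x i|) (f := atTop (α := ℕ))).sub h2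
  simpa using this

lemma sign_mul_self (r : ℝ) : Real.sign r * r = |r| := by
  rcases lt_trichotomy r 0 with h | h | h
  · rw [Real.sign_of_neg h, abs_of_neg h]; ring
  · simp [h]
  · rw [Real.sign_of_pos h, abs_of_pos h]; ring

lemma abs_sign_le (r : ℝ) : |Real.sign r| ≤ 1 := by
  rcases Real.sign_apply_eq r with h | h | h <;> rw [h] <;> norm_num

/-- basic neighborhoods of 0 in the weak topology -/
lemma mem_nhds_zero {U : Set W1} (hU : U ∈ 𝓝 (0 : W1)) :
    ∃ (I : Finset (ell1 →L[ℝ] ℝ)) (ε : ℝ), 0 < ε ∧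
      {x : W1 | ∀ φ ∈ I, |φ (sy x)| < ε} ⊆ U := by
  have hind : IsInducing (fun (x : W1) (φ : ell1 →L[ℝ] ℝ) => φ (sy x)) := ⟨rfl⟩
  rw [hind.nhds_eq_comap, Filter.mem_comap] at hU
  obtain ⟨T, hT, hTsub⟩ := hU
  rw [nhds_pi, Filter.mem_pi'] at hT
  obtain ⟨I, V, hV, hVT⟩ := hT
  have hV0 : ∀ φ : ell1 →L[ℝ] ℝ, V φ ∈ 𝓝 (0 : ℝ) := by
    intro φ
    have := hV φ
    simpa [sy] using this
  have hδ : ∀ φ : ell1 →L[ℝ] ℝ, ∃ δ : ℝ, 0 < δ ∧ Metric.ball (0:ℝ) δ ⊆ V φ := by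
    intro φ
    obtain ⟨δ, hδ1, hδ2⟩ := Metric.mem_nhds_iff.mp (hV0 φ)
    exact ⟨δ, hδ1, hδ2⟩
  choose δ hδpos hδsub using hδ
  rcases I.eq_empty_or_nonempty with rfl | hne
  · refine ⟨∅, 1, one_pos, fun x _ => ?_⟩
    apply hTsub
    apply hVT
    simp
  · refine ⟨I, I.inf' hne δ, ?_, ?_⟩
    · rw [Finset.lt_inf'_iff]
      exact fun φ _ => hδpos φ
    · intro x hx
      apply hTsub
      show (fun (φ : ell1 →L[ℝ] ℝ) => φ (sy x)) ∈ T
      apply hVT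
      intro φ hφ
      apply hδsub φ
      rw [Metric.mem_ball, Real.dist_eq, sub_zero]
      exact lt_of_lt_of_le (hx φ hφ) (Finset.inf'_le δ hφ)

/-- the coordinate map into `ℕ → ℝ` -/
def Phi (x : W1) : ℕ → ℝ := fun n => sy x n

lemma Phi_continuous : Continuous Phi :=
  continuous_pi fun n => contW (coordCLM n)

lemma Phi_injective : Function.Injective Phi := by
  intro x y h
  have h2 : sy x = sy y := by
    apply lp.ext
    funext i
    exact congrFun h i
  exact (toWeakSpace ℝ ell1).symm.injective h2

/-- compact subsets of the weak topology are sequentially compact -/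
lemma exists_subseq {S : Set W1} (hS : IsCompact S) (x : ℕ → W1) (hx : ∀ k, x k ∈ S) :
    ∃ z ∈ S, ∃ θ : ℕ → ℕ, StrictMono θ ∧ Tendsto (x ∘ θ) atTop (𝓝 z) := by
  have hT : IsCompact (Phi '' S) := hS.image Phi_continuous
  have hseq : IsSeqCompact (Phi '' S) := hT.isSeqCompact
  obtain ⟨a, ⟨z, hzS, hza⟩, θ, hθ, hconv⟩ := hseq (fun k => Set.mem_image_of_mem Phi (hx k))
  haveI : CompactSpace S := isCompact_iff_compactSpace.mp hS
  have hemb : IsClosedEmbedding (fun (y : S) => Phi y.1) :=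
    (Phi_continuous.comp continuous_subtype_val).isClosedEmbedding
      (Phi_injective.comp Subtype.val_injective)
  have hsub : Tendsto (fun k => (⟨x (θ k), hx (θ k)⟩ : S)) atTop (𝓝 ⟨z, hzS⟩) := by
    rw [hemb.isEmbedding.tendsto_nhds_iff]
    subst hza
    exact hconv
  refine ⟨z, hzS, θ, hθ, ?_⟩
  have := (continuous_subtype_val.tendsto (⟨z, hzS⟩ : S)).comp hsub
  exact this

/-- simple iteration of a state machine -/
def rec3 (init : ℕ × ℕ × Finset ℕ) (f : ℕ × ℕ × Finset ℕ → ℕ × ℕ × Finset ℕ) :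
    ℕ → ℕ × ℕ × Finset ℕ
  | 0 => init
  | l + 1 => f (rec3 init f l)

def e1 (n : ℕ) : ell1 := lp.single 1 n (1 : ℝ)

lemma norm_e1 (n : ℕ) : ‖e1 n‖ = 1 := by
  have := lp.norm_single (p := 1) (E := fun _ : ℕ => ℝ)
    (zero_lt_one : (0:ENNReal) < 1) n (1:ℝ)
  exact this.trans norm_one

lemma e1_apply_self (n : ℕ) : e1 n n = 1 := lp.single_apply_self 1 n 1

lemma e1_apply_ne (n : ℕ) {j : ℕ} (h : j ≠ n) : e1 n j = 0 := lp.single_apply_ne 1 n 1 h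

lemma pigeon (I : Finset (ell1 →L[ℝ] ℝ)) {ε : ℝ} (hε : 0 < ε) (N : ℕ) :
    ∃ n m : ℕ, N ≤ n ∧ N ≤ m ∧ n ≠ m ∧ ∀ φ ∈ I, |φ (e1 n) - φ (e1 m)| < ε := by
  classical
  set a : ℕ → (I → ℝ) := fun n φ => φ.1 (e1 n) with ha
  set C : ℝ := ∑ φ ∈ I, ‖φ‖ with hC
  have hbdd : ∀ n, a n ∈ Metric.closedBall (0 : I → ℝ) C := by
    intro n
    rw [Metric.mem_closedBall, dist_zero_right]
    refine pi_norm_le_iff_of_nonneg (by positivity) |>.mpr fun φ => ?_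
    calc ‖a n φ‖ ≤ ‖φ.1‖ * ‖e1 n‖ := φ.1.le_opNorm _
    _ = ‖φ.1‖ := by rw [norm_e1, mul_one]
    _ ≤ C := Finset.single_le_sum (f := fun ψ => ‖ψ‖) (fun ψ _ => norm_nonneg _) φ.2
  obtain ⟨L, _, θ, hθ, hconv⟩ :=
    tendsto_subseq_of_bounded Metric.isBounded_closedBall hbdd
  have hev : ∀ᶠ j in atTop, dist ((a ∘ θ) j) L < ε / 2 :=
    Metric.tendsto_nhds.mp hconv _ (by positivity)
  obtain ⟨J, hJ⟩ := eventually_atTop.mp hev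
  set n := θ (max J N)
  set m := θ (max J N + 1)
  have hnm : n < m := hθ (Nat.lt_succ_self _)
  refine ⟨n, m, ?_, ?_, hnm.ne, ?_⟩
  · exact le_trans (le_max_right J N) (hθ.le_apply)
  · exact le_trans (le_max_right J N) (le_trans hθ.le_apply (hθ.monotone (Nat.le_succ _)))
  · intro φ hφ
    have h1 := hJ (max J N) (le_max_left J N)
    have h2 := hJ (max J N + 1) (le_trans (le_max_left J N) (Nat.le_succ _))
    have hd : dist (a n) (a m) < ε := by
      calc dist (a n) (a m) ≤ dist (a n) L + dist (a m) L := dist_triangle_right _ _ _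
      _ < ε / 2 + ε / 2 := by exact add_lt_add h1 h2
      _ = ε := by ring
    have hcoord : dist (a n ⟨φ, hφ⟩) (a m ⟨φ, hφ⟩) ≤ dist (a n) (a m) :=
      dist_le_pi_dist (a n) (a m) ⟨φ, hφ⟩
    have : dist (φ (e1 n)) (φ (e1 m)) < ε := lt_of_le_of_lt hcoord hd
    rwa [Real.dist_eq] at this

/-- The Schur-type property: on weakly compact subsets of `ℓ¹`, the coordinate
functionals converge uniformly to zero. -/
lemma key {S : Set W1} (hS : IsCompact S) :
    TendstoUniformlyOn (fun n (x : W1) => sy x n) 0 atTop S := by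
  classical
  by_contra hcon
  rw [Metric.tendstoUniformlyOn_iff] at hcon
  push_neg at hcon
  obtain ⟨ε, hε, hfreq⟩ := hcon
  have hfreq' : ∃ᶠ n in atTop, ∃ x ∈ S, ε ≤ |sy x n| := by
    refine hfreq.mono fun n hn => ?_
    obtain ⟨x, hxS, hx⟩ := hn
    refine ⟨x, hxS, ?_⟩
    have : dist ((0 : W1 → ℝ) x) (sy x n) = |sy x n| := by
      simp [Real.dist_eq]
    rwa [this] at hx
  obtain ⟨ν, hν, hνP⟩ := extraction_of_frequently_atTop hfreq'
  choose xs hxsS hxsge using hνP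
  obtain ⟨z, hzS, θ, hθ, hconv⟩ := exists_subseq hS xs hxsS
  set y : ℕ → W1 := xs ∘ θ with hy
  set m : ℕ → ℕ := ν ∘ θ with hm
  have hmstrict : StrictMono m := hν.comp hθ
  have hmT : Tendsto m atTop atTop := hmstrict.tendsto_atTop
  set w : ℕ → ell1 := fun j => sy (y j) - sy z with hw
  have hw_f : ∀ f : ell1 →L[ℝ] ℝ, Tendsto (fun j => f (w j)) atTop (𝓝 0) := by
    intro f
    have h1 : Tendsto (fun j => f (sy (y j))) atTop (𝓝 (f (sy z))) :=
      ((contW f).tendsto z).comp hconv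
    have h2 := h1.sub (tendsto_const_nhds (x := f (sy z)) (f := atTop (α := ℕ)))
    have h3 : (fun j => f (w j)) = fun j => f (sy (y j)) - f (sy z) := by
      funext j
      rw [hw]
      exact map_sub f _ _
    rw [h3]
    simpa using h2
  have hw_coord : ∀ i, Tendsto (fun j => w j i) atTop (𝓝 0) := by
    intro i
    have := hw_f (coordCLM i)
    simpa using this
  have hbig : ∀ j, ε ≤ |sy (y j) (m j)| := fun j => hxsge (θ j)
  have hz0 : Tendsto (fun i => |sy z i|) atTop (𝓝 0) :=
    (summable_abs (sy z)).tendsto_atTop_zero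
  have hz_small : ∀ᶠ j in atTop, |sy z (m j)| < ε/2 :=
    (hz0.comp hmT).eventually (gt_mem_nhds (by positivity))
  obtain ⟨J₀, hJ₀⟩ := eventually_atTop.mp hz_small
  have hump : ∀ j, J₀ ≤ j → ε/2 ≤ |w j (m j)| := by
    intro j hj
    have h1 : w j (m j) = sy (y j) (m j) - sy z (m j) := by
      rw [hw]; rw [lp.coeFn_sub]; rfl
    have h2 := abs_sub_abs_le_abs_sub (sy (y j) (m j)) (sy z (m j))
    have h3 := hbig j
    have h4 := hJ₀ j hj
    rw [h1]
    linarith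
  -- the step for the recursive construction
  have step : ∀ (J M : ℕ) (P : Finset ℕ),
      ∃ j, J ≤ j ∧ M < m j ∧ ∑ i ∈ P, |w j i| < ε/16 := by
    intro J M P
    have h1 : ∀ᶠ j in atTop, J ≤ j := eventually_ge_atTop J
    have h2 : ∀ᶠ j in atTop, M < m j := hmT.eventually_gt_atTop M
    have h3 : Tendsto (fun j => ∑ i ∈ P, |w j i|) atTop (𝓝 0) := by
      have := tendsto_finset_sum P (fun i _ => (hw_coord i).abs)
      simpa using this
    have h4 := h3.eventually (gt_mem_nhds (by positivity : (0:ℝ) < ε/16))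
    obtain ⟨j, hj⟩ := ((h1.and h2).and h4).exists
    exact ⟨j, hj.1.1, hj.1.2, hj.2⟩
  have tailpick : ∀ (x : ell1) (M₀ : ℕ), ∃ M, M₀ ≤ M ∧ tailAbs x (M+1) < ε/16 := by
    intro x M₀
    have h1 : ∀ᶠ M in atTop, M₀ ≤ M := eventually_ge_atTop M₀
    have h2 : Tendsto (fun M => tailAbs x (M+1)) atTop (𝓝 0) :=
      (tailAbs_tendsto x).comp (tendsto_add_atTop_nat 1)
    have h3 := h2.eventually (gt_mem_nhds (by positivity : (0:ℝ) < ε/16))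
    obtain ⟨M, hM⟩ := (h1.and h3).exists
    exact ⟨M, hM.1, hM.2⟩
  choose stepj hstep1 hstep2 hstep3 using step
  choose tbM htb1 htb2 using tailpick
  set G : ℕ → ℕ × ℕ × Finset ℕ :=
    rec3 (stepj J₀ 0 ∅, tbM (w (stepj J₀ 0 ∅)) (m (stepj J₀ 0 ∅)), {m (stepj J₀ 0 ∅)})
      (fun s => (stepj (max J₀ (s.1+1)) s.2.1 s.2.2,
        tbM (w (stepj (max J₀ (s.1+1)) s.2.1 s.2.2))
          (max s.2.1 (m (stepj (max J₀ (s.1+1)) s.2.1 s.2.2))),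
        insert (m (stepj (max J₀ (s.1+1)) s.2.1 s.2.2)) s.2.2)) with hG
  set jj : ℕ → ℕ := fun l => (G l).1 with hjjdef
  set MM : ℕ → ℕ := fun l => (G l).2.1 with hMMdef
  set PP : ℕ → Finset ℕ := fun l => (G l).2.2 with hPPdef
  set p : ℕ → ℕ := fun l => m (jj l) with hpdef
  have e0 : jj 0 = stepj J₀ 0 ∅ := rfl
  have eM0 : MM 0 = tbM (w (jj 0)) (p 0) := rfl
  have eP0 : PP 0 = {p 0} := rfl
  have es : ∀ l, jj (l+1) = stepj (max J₀ (jj l + 1)) (MM l) (PP l) := fun l => rfl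
  have eMs : ∀ l, MM (l+1) = tbM (w (jj (l+1))) (max (MM l) (p (l+1))) := fun l => rfl
  have ePs : ∀ l, PP (l+1) = insert (p (l+1)) (PP l) := fun l => rfl
  have A1 : ∀ l, J₀ ≤ jj l := by
    intro l
    cases l with
    | zero => rw [e0]; exact hstep1 J₀ 0 ∅
    | succ t => rw [es t]; exact le_trans (le_max_left _ _) (hstep1 _ _ _)
  have A2 : ∀ l, jj l < jj (l+1) := by
    intro l
    rw [es l]
    exact lt_of_lt_of_le (Nat.lt_succ_self _)
      (le_trans (le_max_right _ _) (hstep1 _ _ _))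
  have A3 : ∀ l, MM l < p (l+1) := by
    intro l
    have h := hstep2 (max J₀ (jj l + 1)) (MM l) (PP l)
    show MM l < m (jj (l+1))
    rw [es l]
    exact h
  have A4 : ∀ l, ∑ i ∈ PP l, |w (jj (l+1)) i| < ε/16 := by
    intro l
    have := hstep3 (max J₀ (jj l + 1)) (MM l) (PP l)
    rw [es l]
    exact this
  have A5 : ∀ l, p l ≤ MM l := by
    intro l
    cases l with
    | zero => rw [eM0]; exact htb1 _ _
    | succ t =>
      rw [eMs t]
      exact le_trans (le_max_right _ _) (htb1 _ _)
  have A6 : Monotone MM := by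
    apply monotone_nat_of_le_succ
    intro l
    rw [eMs l]
    exact le_trans (le_max_left _ _) (htb1 _ _)
  have A7 : ∀ l, tailAbs (w (jj l)) (MM l + 1) < ε/16 := by
    intro l
    cases l with
    | zero => rw [eM0]; exact htb2 _ _
    | succ t => rw [eMs t]; exact htb2 _ _
  have A8 : ∀ l, PP l = Finset.image p (Finset.range (l+1)) := by
    intro l
    induction l with
    | zero => rw [eP0]; simp
    | succ t ih =>
      rw [ePs t, ih]
      have hr : Finset.range (t+1+1) = insert (t+1) (Finset.range (t+1)) := Finset.range_add_one
      rw [hr, Finset.image_insert]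
  have hpstrict : StrictMono p := by
    apply strictMono_nat_of_lt_succ
    intro l
    exact lt_of_le_of_lt (A5 l) (A3 l)
  have hgt : ∀ l l', l < l' → MM l < p l' := by
    intro l l' h
    obtain ⟨t, rfl⟩ : ∃ t, l' = t + 1 := ⟨l' - 1, by omega⟩
    exact lt_of_le_of_lt (A6 (by omega : l ≤ t)) (A3 t)
  -- the sign functional
  set g : ℕ → ℝ := fun i =>
    if h : ∃ l, p l = i then Real.sign (w (jj h.choose) i) else 0 with hgdef
  have hg1 : ∀ i, |g i| ≤ 1 := by
    intro i
    by_cases h : ∃ l, p l = i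
    · rw [hgdef]; simp only [dif_pos h]; exact abs_sign_le _
    · rw [hgdef]; simp only [dif_neg h]; norm_num
  have hgp : ∀ l, g (p l) = Real.sign (w (jj l) (p l)) := by
    intro l
    have h : ∃ l', p l' = p l := ⟨l, rfl⟩
    have h2 : h.choose = l := hpstrict.injective h.choose_spec
    rw [hgdef]
    simp only [dif_pos h, h2]
  have hgno : ∀ i, (¬ ∃ l, p l = i) → g i = 0 := by
    intro i h
    rw [hgdef]; simp only [dif_neg h]
  set ψ : ell1 →L[ℝ] ℝ := dualCLM g hg1 with hψdef
  -- the estimate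
  have est : ∀ l, ε/4 ≤ |ψ (w (jj l))| := by
    intro l
    set x : ell1 := w (jj l) with hx
    set q : ℕ := p l with hq
    set M : ℕ := MM l with hMq
    set Q : Finset ℕ := Finset.image p (Finset.range l) with hQdef
    have hQsum : ∑ i ∈ Q, |x i| < ε/16 := by
      cases l with
      | zero =>
        have : Q = ∅ := by rw [hQdef]; simp
        rw [this]
        simp
        positivity
      | succ t =>
        have h1 := A4 t
        rw [A8 t] at h1
        exact h1
    have htail : tailAbs x (M+1) < ε/16 := A7 l
    have hsum : Summable fun i => g i * x i := summable_mul hg1 x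
    have hsplit : ψ x = g q * x q + ∑' i, (if i = q then 0 else g i * x i) :=
      (dualCLM_apply g hg1 x).trans (Summable.tsum_eq_add_tsum_ite hsum q)
    set R : ℝ := ∑' i, (if i = q then 0 else g i * x i) with hR
    set d : ℕ → ℝ := fun i => Set.indicator (↑Q) (fun j => |x j|) i +
      Set.indicator {i : ℕ | M + 1 ≤ i} (fun j => |x j|) i with hd
    have hdnonneg : ∀ i, 0 ≤ d i := by
      intro i
      apply add_nonneg <;> exact Set.indicator_nonneg (fun _ _ => abs_nonneg _) _
    have hs1 : Summable fun i => ‖if i = q then 0 else g i * x i‖ := by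
      refine Summable.of_nonneg_of_le (fun i => norm_nonneg _) (fun i => ?_) (summable_abs x)
      by_cases hiq : i = q
      · simp [hiq]
      · rw [if_neg hiq, Real.norm_eq_abs, abs_mul]
        exact mul_le_of_le_one_left (abs_nonneg _) (hg1 i)
    have hsd : Summable d := (summable_indicator x _).add (summable_indicator x _)
    have hpw : ∀ i, ‖if i = q then 0 else g i * x i‖ ≤ d i := by
      intro i
      by_cases hiq : i = q
      · rw [if_pos hiq]; simpa using hdnonneg i
      · rw [if_neg hiq, Real.norm_eq_abs]
        have habs : |g i * x i| ≤ |x i| := by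
          rw [abs_mul]
          exact mul_le_of_le_one_left (abs_nonneg _) (hg1 i)
        by_cases hex : ∃ l', p l' = i
        · obtain ⟨l', hl'⟩ := hex
          rcases lt_trichotomy l' l with hlt | heq | hgtl
          · have hmem : i ∈ (↑Q : Set ℕ) := by
              rw [hQdef]
              simp only [Finset.coe_image, Set.mem_image, Finset.mem_coe, Finset.coe_range,
                Set.mem_Iio]
              exact ⟨l', hlt, hl'⟩
            rw [hd]
            have h1 : Set.indicator (↑Q) (fun j => |x j|) i = |x i| :=
              Set.indicator_of_mem hmem _
            have h2 : (0:ℝ) ≤ Set.indicator {i : ℕ | M + 1 ≤ i} (fun j => |x j|) i :=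
              Set.indicator_nonneg (fun _ _ => abs_nonneg _) _
            simp only []
            rw [h1]
            linarith
          · exact absurd (by rw [← hl', heq]) hiq
          · have hmem : i ∈ {i : ℕ | M + 1 ≤ i} := by
              have := hgt l l' hgtl
              rw [hl'] at this
              simpa using this
            rw [hd]
            have h1 : Set.indicator {i : ℕ | M + 1 ≤ i} (fun j => |x j|) i = |x i| :=
              Set.indicator_of_mem hmem _
            have h2 : (0:ℝ) ≤ Set.indicator (↑Q) (fun j => |x j|) i :=
              Set.indicator_nonneg (fun _ _ => abs_nonneg _) _
            simp only []
            rw [h1]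
            linarith
        · rw [hgno i hex]
          simpa using hdnonneg i
    have hRbound : |R| ≤ ε/16 + ε/16 := by
      have h1 : ‖R‖ ≤ ∑' i, ‖if i = q then 0 else g i * x i‖ := norm_tsum_le_tsum_norm hs1
      have h2 : ∑' i, ‖if i = q then 0 else g i * x i‖ ≤ ∑' i, d i :=
        Summable.tsum_le_tsum hpw hs1 hsd
      have h3 : ∑' i, d i = (∑ i ∈ Q, |x i|) + tailAbs x (M+1) := by
        rw [hd]
        rw [Summable.tsum_add (summable_indicator x _) (summable_indicator x _)]
        congr 1
        rw [← tsum_subtype (↑Q : Set ℕ) (fun j => |x j|)]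
        exact Finset.tsum_subtype' Q (fun j => |x j|)
      rw [Real.norm_eq_abs] at h1
      rw [h3] at h2
      linarith
    have hhump : ε/2 ≤ g q * x q := by
      rw [hq, hgp l, sign_mul_self]
      exact hump (jj l) (A1 l)
    have hψx : ε/4 ≤ ψ x := by
      rw [hsplit]
      have : -(ε/16 + ε/16) ≤ R := neg_le_of_abs_le hRbound
      linarith
    exact le_trans hψx (le_abs_self _)
  -- contradiction
  have hjjstrict : StrictMono jj := strictMono_nat_of_lt_succ A2
  have hψ0 : Tendsto (fun l => ψ (w (jj l))) atTop (𝓝 0) :=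
    (hw_f ψ).comp hjjstrict.tendsto_atTop
  have hψabs : Tendsto (fun l => |ψ (w (jj l))|) atTop (𝓝 0) := by
    have := hψ0.abs
    simpa using this
  obtain ⟨l, hl⟩ := (hψabs.eventually (gt_mem_nhds (by positivity : (0:ℝ) < ε/4))).exists
  linarith [est l]

end
end Aux11

theorem stmt_11 : ¬ IsAscoli ell1WeakBall := by
  classical
  intro hA
  have hcont : ∀ n : ℕ, Continuous fun y : ell1WeakBall => Aux11.sy y.1 n := fun n =>
    (Aux11.contW (Aux11.coordCLM n)).comp continuous_subtype_val
  set fseq : ℕ → C(ell1WeakBall, ℝ) := fun n => ⟨fun y => Aux11.sy y.1 n, hcont n⟩ with hfseq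
  have htend : Filter.Tendsto fseq Filter.atTop (𝓝 (0 : C(ell1WeakBall, ℝ))) := by
    rw [ContinuousMap.tendsto_iff_forall_isCompact_tendstoUniformlyOn]
    intro Sc hSc
    have h1 := Aux11.key (hSc.image continuous_subtype_val)
    have h2 := h1.comp (Subtype.val : ell1WeakBall → Aux11.W1)
    have h3 := h2.mono (Set.subset_preimage_image _ Sc)
    exact h3
  set K : Set C(ell1WeakBall, ℝ) := insert 0 (Set.range fseq) with hK
  have hKc : IsCompact K := htend.isCompact_insert_range
  have hev := hA K hKc
  have h0mem : (0 : WeakSpace ℝ ell1) ∈ ell1WeakBall := by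
    show ‖(toWeakSpace ℝ ell1).symm 0‖ ≤ 1
    rw [map_zero, norm_zero]
    norm_num
  set y0 : ell1WeakBall := ⟨0, h0mem⟩ with hy0
  set k0 : K := ⟨0, Set.mem_insert _ _⟩ with hk0
  have hat : ContinuousAt (fun p : ell1WeakBall × K => (p.2 : C(ell1WeakBall, ℝ)) p.1)
      (y0, k0) := hev.continuousAt
  have hval : (fun p : ell1WeakBall × K => (p.2 : C(ell1WeakBall, ℝ)) p.1) (y0, k0) = 0 := by
    simp [hk0]
  have hball : Metric.ball (0:ℝ) 2⁻¹ ∈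
      𝓝 ((fun p : ell1WeakBall × K => (p.2 : C(ell1WeakBall, ℝ)) p.1) (y0, k0)) := by
    rw [hval]
    exact Metric.ball_mem_nhds _ (by norm_num)
  have hpre : (fun p : ell1WeakBall × K => (p.2 : C(ell1WeakBall, ℝ)) p.1) ⁻¹'
      Metric.ball (0:ℝ) 2⁻¹ ∈ 𝓝 (y0, k0) := hat hball
  rw [mem_nhds_prod_iff] at hpre
  obtain ⟨U, hU, V, hV, hUV⟩ := hpre
  have hfmem : ∀ n, fseq n ∈ K := fun n => Set.mem_insert_iff.mpr (Or.inr ⟨n, rfl⟩)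
  have hkt : Filter.Tendsto (fun n => (⟨fseq n, hfmem n⟩ : K)) Filter.atTop (𝓝 k0) := by
    rw [tendsto_subtype_rng]
    exact htend
  have hVev := hkt.eventually_mem hV
  obtain ⟨N, hN⟩ := Filter.eventually_atTop.mp hVev
  rw [nhds_subtype] at hU
  obtain ⟨U', hU', hU'sub⟩ := Filter.mem_comap.mp hU
  have hU'0 : U' ∈ 𝓝 (0 : Aux11.W1) := hU'
  obtain ⟨I, ε', hε', hIsub⟩ := Aux11.mem_nhds_zero hU'0
  obtain ⟨n, mi, hnN, hmN, hnm, hφ⟩ := Aux11.pigeon I hε' N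
  set v : ell1 := (2⁻¹ : ℝ) • (Aux11.e1 n - Aux11.e1 mi) with hv
  have hvnorm : ‖v‖ ≤ 1 := by
    rw [hv, norm_smul]
    have h1 := norm_sub_le (Aux11.e1 n) (Aux11.e1 mi)
    rw [Aux11.norm_e1, Aux11.norm_e1] at h1
    have h2 : ‖(2⁻¹ : ℝ)‖ = 2⁻¹ := by
      rw [Real.norm_eq_abs]
      norm_num
    rw [h2]
    nlinarith [norm_nonneg (Aux11.e1 n - Aux11.e1 mi)]
  set u : Aux11.W1 := toWeakSpace ℝ ell1 v with hu
  have hsyu : Aux11.sy u = v := (toWeakSpace ℝ ell1).symm_apply_apply v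
  have humem : u ∈ ell1WeakBall := by
    show ‖Aux11.sy u‖ ≤ 1
    rw [hsyu]
    exact hvnorm
  have huU' : u ∈ U' := by
    apply hIsub
    intro φ hφI
    show |φ (Aux11.sy u)| < ε'
    rw [hsyu, hv, map_smul, map_sub]
    have h1 := hφ φ hφI
    rw [smul_eq_mul, abs_mul]
    have h2 : |(2⁻¹ : ℝ)| = 2⁻¹ := by norm_num
    rw [h2]
    nlinarith [abs_nonneg (φ (Aux11.e1 n) - φ (Aux11.e1 mi))]
  have huU : (⟨u, humem⟩ : ell1WeakBall) ∈ U := hU'sub huU'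
  have hfV : (⟨fseq n, hfmem n⟩ : K) ∈ V := hN n hnN
  have hmem := hUV (Set.mk_mem_prod huU hfV)
  have hvaln : Aux11.sy u n = 2⁻¹ := by
    rw [hsyu, hv]
    have hc : ((2⁻¹ : ℝ) • (Aux11.e1 n - Aux11.e1 mi) : ell1) n
        = 2⁻¹ * ((Aux11.e1 n : ell1) n - (Aux11.e1 mi : ell1) n) := by
      rw [lp.coeFn_smul, Pi.smul_apply, lp.coeFn_sub, Pi.sub_apply, smul_eq_mul]
    rw [hc, Aux11.e1_apply_self, Aux11.e1_apply_ne mi hnm]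
    norm_num
  have : ((⟨fseq n, hfmem n⟩ : K) : C(ell1WeakBall, ℝ)) (⟨u, humem⟩ : ell1WeakBall)
      ∈ Metric.ball (0:ℝ) 2⁻¹ := hmem
  have hcontra : (2⁻¹ : ℝ) ∈ Metric.ball (0:ℝ) 2⁻¹ := by
    have heq : ((⟨fseq n, hfmem n⟩ : K) : C(ell1WeakBall, ℝ)) (⟨u, humem⟩ : ell1WeakBall)
        = 2⁻¹ := by
      show Aux11.sy u n = 2⁻¹
      exact hvaln
    rwa [heq] at this
  rw [Metric.mem_ball, Real.dist_eq, sub_zero,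
    abs_of_nonneg (by norm_num : (0:ℝ) ≤ 2⁻¹)] at hcontra
  exact lt_irrefl _ hcontra
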